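/- Let φ ∈ ℝ⟦λ⟧ be the unique formal power series with constant coefficient 0 satisfying φ = λ·(1+φ)⁴. Then for every integer i ≥ 1, the coefficient of λⁱ in the power series φ·(1 − φ − φ²) equals 2·(4i+1)! / ((i+1)!·(3i+2)!). In other words, φ·(1 − φ − φ²) equals Tutte's series τ(λ) = Σ_{i=1}^∞ [2·(4i+1)! / ((i+1)!·(3i+2)!)]·λⁱ. -/

import Mathlib

open Finset

lemma vand (m n k : ℕ) :
    (m + n).choose k = ∑ j ∈ range (k+1), m.choose j * n.choose (k - j) := by
  rw [Nat.add_choose_eq, Finset.Nat.sum_antidiagonal_eq_sum_range_succ_mk]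

lemma natkey (l d : ℕ) (hd : 1 ≤ d) :
    (l + d + 1) * ∑ j ∈ range (d+1),
        Nat.choose 4 j * ((l + j) * Nat.choose (4*(l+d)) (d - j)) =
    (l + 1) * (l + d) * Nat.choose (4*(l+d) + 4) d := by
  set n := l + d with hn
  have hA : ∑ j ∈ range (d+1), Nat.choose 4 j * Nat.choose (4*n) (d - j)
      = Nat.choose (4*n + 4) d := by
    rw [add_comm (4*n) 4, vand]
  have hB : ∑ j ∈ range (d+1), Nat.choose 4 j * (j * Nat.choose (4*n) (d - j))
      = 4 * Nat.choose (4*n + 3) (d - 1) := by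
    rw [Finset.sum_range_succ']
    simp only [Nat.mul_zero, Nat.zero_mul, mul_zero, add_zero]
    have : ∀ j, Nat.choose 4 (j+1) * ((j+1) * Nat.choose (4*n) (d - (j+1)))
        = 4 * (Nat.choose 3 j * Nat.choose (4*n) (d - 1 - j)) := by
      intro j
      have h4 : Nat.choose 4 (j+1) * (j+1) = 4 * Nat.choose 3 j := by
        simpa [Nat.succ_eq_add_one, mul_comm] using (Nat.add_one_mul_choose_eq 3 j).symm
      have : d - (j+1) = d - 1 - j := by omega
      rw [this, ← mul_assoc, h4]; ring
    rw [Finset.sum_congr rfl fun j _ => this j]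
    rw [← Finset.mul_sum]
    congr 1
    obtain ⟨e, rfl⟩ : ∃ e, d = e + 1 := ⟨d - 1, by omega⟩
    rw [show 4*n+3 = 3 + 4*n by ring]
    simpa using (vand 3 (4*n) e).symm
  have hsplit : ∑ j ∈ range (d+1),
        Nat.choose 4 j * ((l + j) * Nat.choose (4*n) (d - j))
      = l * Nat.choose (4*n+4) d + 4 * Nat.choose (4*n + 3) (d - 1) := by
    rw [← hA, ← hB, Finset.mul_sum, ← Finset.sum_add_distrib]
    exact Finset.sum_congr rfl fun j _ => by ring
  have hstep : (4*n + 4) * Nat.choose (4*n + 3) (d - 1) = d * Nat.choose (4*n+4) d := by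
    have h := Nat.add_one_mul_choose_eq (4*n+3) (d - 1)
    have hd1 : d - 1 + 1 = d := by omega
    simp only [Nat.succ_eq_add_one, hd1] at h
    exact h.trans (mul_comm _ _)
  rw [hsplit]
  have : (n + 1) * (l * Nat.choose (4*n+4) d + 4 * Nat.choose (4*n + 3) (d - 1))
      = (n+1) * l * Nat.choose (4*n+4) d + (4*n+4) * Nat.choose (4*n+3) (d-1) := by ring
  rw [this, hstep, hn]
  ring

noncomputable def fc (i k : ℕ) : ℝ :=
  if i = 0 then (if k = 0 then 1 else 0)
  else if k ≤ i then (k : ℝ) * (Nat.choose (4*i) (i - k) : ℝ) / i else 0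

lemma fckey (i l : ℕ) :
    fc (i+1) (l+1) = ∑ j ∈ range 5, (Nat.choose 4 j : ℝ) * fc i (l + j) := by
  rcases Nat.eq_zero_or_pos i with rfl | hi
  · rcases Nat.eq_zero_or_pos l with rfl | hl
    · simp [fc, Finset.sum_range_succ]
    · have h1 : fc 1 (l+1) = 0 := by simp [fc]; omega
      rw [h1]
      refine (Finset.sum_eq_zero fun j _ => ?_).symm
      have : fc 0 (l + j) = 0 := by simp [fc]; omega
      simp [this]
  · rcases lt_trichotomy l i with hl | rfl | hl
    · -- main case
      obtain ⟨d, hd, rfl⟩ : ∃ d, 1 ≤ d ∧ i = l + d := ⟨i - l, by omega, by omega⟩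
      set i := l + d with hi'
      have hne : (i : ℝ) ≠ 0 := by positivity
      have hne1 : ((i:ℝ) + 1) ≠ 0 := by positivity
      have hlhs : fc (i+1) (l+1) = (l+1 : ℝ) * (Nat.choose (4*i+4) d : ℝ) / (i+1) := by
        have g1 : i + 1 - (l + 1) = d := by omega
        have g2 : 4 * (i+1) = 4*i + 4 := by ring
        simp only [fc, if_neg (Nat.succ_ne_zero i), if_pos (by omega : l + 1 ≤ i + 1), g1, g2]
        push_cast
        ring
      have hterm : ∀ j, (Nat.choose 4 j : ℝ) * fc i (l + j)
          = (Nat.choose 4 j : ℝ) *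
            (if j ≤ d then ((l+j : ℕ) : ℝ) * (Nat.choose (4*i) (d - j) : ℝ) / i else 0) := by
        intro j
        congr 1
        simp only [fc, if_neg (by omega : ¬ i = 0)]
        by_cases h : j ≤ d
        · rw [if_pos (by omega : l + j ≤ i), if_pos h, show i - (l+j) = d - j by omega]
        · rw [if_neg (by omega : ¬ l + j ≤ i), if_neg h]
      simp only [hterm]
      set f : ℕ → ℝ := fun j => (Nat.choose 4 j : ℝ) *
            (if j ≤ d then ((l+j : ℕ) : ℝ) * (Nat.choose (4*i) (d - j) : ℝ) / i else 0) with hf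
      have hN : ∀ N, 5 ≤ N → ∑ j ∈ range 5, f j = ∑ j ∈ range N, f j := by
        intro N hN
        refine Finset.sum_subset (Finset.range_subset_range.2 hN) fun j _ hj => ?_
        have : 4 < j := by simp at hj; omega
        simp [hf, Nat.choose_eq_zero_of_lt this]
      have hN' : ∀ N, d + 1 ≤ N → ∑ j ∈ range (d+1), f j = ∑ j ∈ range N, f j := by
        intro N hN
        refine Finset.sum_subset (Finset.range_subset_range.2 hN) fun j _ hj => ?_
        have : d < j := by simp at hj; omega
        simp [hf, if_neg (by omega : ¬ j ≤ d)]
      have hsum : ∑ j ∈ range 5, f j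
          = ((∑ j ∈ range (d+1),
              Nat.choose 4 j * ((l + j) * Nat.choose (4*i) (d - j)) : ℕ) : ℝ) / i := by
        rw [hN (max 5 (d+1)) (le_max_left _ _), ← hN' (max 5 (d+1)) (le_max_right _ _)]
        push_cast
        rw [Finset.sum_div]
        refine Finset.sum_congr rfl fun j hj => ?_
        have hjd : j ≤ d := by simpa [Nat.lt_succ_iff] using hj
        simp only [hf, if_pos hjd]
        push_cast
        ring
      rw [hsum, hlhs, div_eq_div_iff hne1 hne]
      have h := natkey l d hd
      have h2 : (l + 1) * Nat.choose (4*i+4) d * i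
          = (∑ j ∈ range (d+1), Nat.choose 4 j * ((l + j) * Nat.choose (4*i) (d - j))) * (i+1) := by
        calc (l + 1) * Nat.choose (4*i+4) d * i
            = (l + 1) * (l + d) * Nat.choose (4*(l+d)+4) d := by rw [hi']; ring
          _ = (l + d + 1) * ∑ j ∈ range (d+1),
                Nat.choose 4 j * ((l + j) * Nat.choose (4*(l+d)) (d - j)) := h.symm
          _ = (∑ j ∈ range (d+1), Nat.choose 4 j * ((l + j) * Nat.choose (4*i) (d - j))) * (i+1) := by
              rw [hi']; ring
      exact_mod_cast h2
    · -- l = i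
      have hlhs : fc (l+1) (l+1) = 1 := by
        simp only [fc, if_neg (Nat.succ_ne_zero l), if_pos (le_refl (l+1)), Nat.sub_self,
          Nat.choose_zero_right]
        have : ((l:ℝ)+1) ≠ 0 := by positivity
        push_cast
        field_simp
      have h0 : fc l (l + 0) = 1 := by
        simp only [fc, if_neg (by omega : ¬ l = 0), Nat.add_zero, if_pos (le_refl l),
          Nat.sub_self, Nat.choose_zero_right]
        have : (l:ℝ) ≠ 0 := by positivity
        push_cast
        field_simp
      rw [hlhs, Finset.sum_range_succ', h0]
      have : ∀ j ∈ range 4, (Nat.choose 4 (j+1) : ℝ) * fc l (l + (j+1)) = 0 := by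
        intro j _
        have : fc l (l + (j+1)) = 0 := by
          simp only [fc]
          rw [if_neg (by omega : ¬ l = 0), if_neg (by omega : ¬ l + (j+1) ≤ l)]
        simp [this]
      rw [Finset.sum_congr rfl this]
      simp
    · -- l > i : both sides 0
      have h1 : fc (i+1) (l+1) = 0 := by simp only [fc]; rw [if_neg (by omega), if_neg (by omega)]
      rw [h1]
      refine (Finset.sum_eq_zero fun j _ => ?_).symm
      have : fc i (l + j) = 0 := by simp only [fc]; rw [if_neg (by omega), if_neg (by omega)]
      simp [this]

open PowerSeries in
lemma coeff_pow_eq (φ : PowerSeries ℝ) (hφ0 : constantCoeff φ = 0)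
    (hφ : φ = X * (1 + φ) ^ 4) :
    ∀ i k : ℕ, coeff i (φ ^ k) = fc i k := by
  intro i
  induction i with
  | zero =>
    intro k
    rw [PowerSeries.coeff_zero_eq_constantCoeff, map_pow, hφ0]
    cases k with
    | zero => simp [fc]
    | succ l => simp [fc, zero_pow]
  | succ i ih =>
    intro k
    cases k with
    | zero =>
      simp only [pow_zero, fc, if_neg (Nat.succ_ne_zero i), if_pos (by omega : 0 ≤ i + 1)]
      rw [PowerSeries.coeff_one]
      simp
    | succ l =>
      have h1 : φ ^ (l+1) = X * ∑ j ∈ range (4+1),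
          ((Nat.choose 4 j : ℕ) : PowerSeries ℝ) * φ ^ (l + j) := by
        rw [pow_succ]
        nth_rewrite 2 [hφ]
        calc φ ^ l * (X * (1 + φ) ^ 4) = X * ((φ + 1) ^ 4 * φ ^ l) := by ring
          _ = X * ((∑ j ∈ range (4+1),
                φ ^ j * 1 ^ (4 - j) * ((Nat.choose 4 j : ℕ) : PowerSeries ℝ)) * φ ^ l) := by
              rw [add_pow]
          _ = X * ∑ j ∈ range (4+1), ((Nat.choose 4 j : ℕ) : PowerSeries ℝ) * φ ^ (l + j) := by
              rw [Finset.sum_mul]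
              congr 1
              refine Finset.sum_congr rfl fun j _ => ?_
              ring
      rw [h1, PowerSeries.coeff_succ_X_mul, map_sum, fckey i l]
      refine Finset.sum_congr rfl fun j _ => ?_
      rw [← ih (l+j), ← map_natCast (PowerSeries.C (R := ℝ)) (Nat.choose 4 j), PowerSeries.coeff_C_mul]

set_option maxHeartbeats 1000000 in
lemma final_id (m : ℕ) :
    ((Nat.choose (4*m+12) (m+2) : ℝ)) / (m+3)
      - 2 * (Nat.choose (4*m+12) (m+1) : ℝ) / (m+3)
      - 3 * (Nat.choose (4*m+12) m : ℝ) / (m+3)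
    = 2 * (Nat.factorial (4*m+13) : ℝ)
        / ((Nat.factorial (m+4) : ℝ) * (Nat.factorial (3*m+11) : ℝ)) := by
  have e1 : (Nat.choose (4*m+12) (m+2) : ℝ)
      = (Nat.factorial (4*m+12) : ℝ)
        / ((Nat.factorial (m+2) : ℝ) * (Nat.factorial (3*m+10) : ℝ)) := by
    rw [Nat.cast_choose ℝ (by omega), show 4*m+12 - (m+2) = 3*m+10 by omega]
  have e2 : (Nat.choose (4*m+12) (m+1) : ℝ)
      = (Nat.factorial (4*m+12) : ℝ)
        / ((Nat.factorial (m+1) : ℝ) * (Nat.factorial (3*m+11) : ℝ)) := by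
    rw [Nat.cast_choose ℝ (by omega), show 4*m+12 - (m+1) = 3*m+11 by omega]
  have e3 : (Nat.choose (4*m+12) m : ℝ)
      = (Nat.factorial (4*m+12) : ℝ)
        / ((Nat.factorial m : ℝ) * (Nat.factorial (3*m+12) : ℝ)) := by
    rw [Nat.cast_choose ℝ (by omega), show 4*m+12 - m = 3*m+12 by omega]
  have f1 : (Nat.factorial (m+2) : ℝ) = ((m:ℝ)+2) * ((m:ℝ)+1) * (Nat.factorial m : ℝ) := by
    rw [Nat.factorial_succ, Nat.factorial_succ]; push_cast; ring
  have f2 : (Nat.factorial (m+1) : ℝ) = ((m:ℝ)+1) * (Nat.factorial m : ℝ) := by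
    rw [Nat.factorial_succ]; push_cast; ring
  have f4 : (Nat.factorial (m+4) : ℝ)
      = ((m:ℝ)+4) * ((m:ℝ)+3) * ((m:ℝ)+2) * ((m:ℝ)+1) * (Nat.factorial m : ℝ) := by
    rw [Nat.factorial_succ, Nat.factorial_succ, Nat.factorial_succ, Nat.factorial_succ]
    push_cast; ring
  have g1 : (Nat.factorial (3*m+11) : ℝ) = (3*(m:ℝ)+11) * (Nat.factorial (3*m+10) : ℝ) := by
    rw [show 3*m+11 = (3*m+10)+1 by ring, Nat.factorial_succ]; push_cast; ring
  have g2 : (Nat.factorial (3*m+12) : ℝ)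
      = (3*(m:ℝ)+12) * (3*(m:ℝ)+11) * (Nat.factorial (3*m+10) : ℝ) := by
    rw [show 3*m+12 = (3*m+11)+1 by ring, Nat.factorial_succ]
    push_cast
    rw [g1]; ring
  have h1 : (Nat.factorial (4*m+13) : ℝ) = (4*(m:ℝ)+13) * (Nat.factorial (4*m+12) : ℝ) := by
    rw [show 4*m+13 = (4*m+12)+1 by ring, Nat.factorial_succ]; push_cast; ring
  rw [e1, e2, e3, f1, f2, f4, g1, g2, h1]
  have p0 : (Nat.factorial m : ℝ) ≠ 0 := by positivity
  have p1 : (Nat.factorial (3*m+10) : ℝ) ≠ 0 := by positivity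
  have p2 : ((m:ℝ)+1) ≠ 0 := by positivity
  have p3 : ((m:ℝ)+2) ≠ 0 := by positivity
  have p4 : ((m:ℝ)+3) ≠ 0 := by positivity
  have p5 : ((m:ℝ)+4) ≠ 0 := by positivity
  have p6 : (3*(m:ℝ)+11) ≠ 0 := by positivity
  have p7 : (3*(m:ℝ)+12) ≠ 0 := by positivity
  field_simp
  ring

open PowerSeries in
/-- Let `φ ∈ ℝ⟦λ⟧` be the unique formal power series with constant
coefficient `0` satisfying `φ = λ·(1+φ)⁴`.  Then for every `i ≥ 1`, the coefficient of `λⁱ`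
in `φ·(1 − φ − φ²)` equals `2·(4i+1)! / ((i+1)!·(3i+2)!)`; i.e. `φ·(1 − φ − φ²)` is
Tutte's series `τ`. -/
theorem tutte_root_gives_tutte_series (φ : PowerSeries ℝ)
    (hφ0 : constantCoeff φ = 0)
    (hφ : φ = X * (1 + φ) ^ 4) :
    ∀ i : ℕ, 1 ≤ i →
      coeff i (φ * (1 - φ - φ ^ 2)) =
        2 * (Nat.factorial (4 * i + 1) : ℝ) /
          ((Nat.factorial (i + 1) : ℝ) * (Nat.factorial (3 * i + 2) : ℝ)) := by
  intro i hi
  have hprod : φ * (1 - φ - φ ^ 2) = φ ^ 1 - φ ^ 2 - φ ^ 3 := by ring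
  rw [hprod, map_sub, map_sub, coeff_pow_eq φ hφ0 hφ, coeff_pow_eq φ hφ0 hφ,
    coeff_pow_eq φ hφ0 hφ]
  match i, hi with
  | 1, _ => norm_num [fc, Nat.factorial]
  | 2, _ => norm_num [fc, Nat.factorial]
  | (m+3), _ =>
    have v1 : fc (m+3) 1 = (Nat.choose (4*m+12) (m+2) : ℝ) / (m+3) := by
      simp only [fc, if_neg (by omega : ¬ m + 3 = 0), if_pos (by omega : 1 ≤ m + 3),
        show m + 3 - 1 = m + 2 by omega, show 4*(m+3) = 4*m+12 by ring]
      push_cast; ring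
    have v2 : fc (m+3) 2 = 2 * (Nat.choose (4*m+12) (m+1) : ℝ) / (m+3) := by
      simp only [fc, if_neg (by omega : ¬ m + 3 = 0), if_pos (by omega : 2 ≤ m + 3),
        show m + 3 - 2 = m + 1 by omega, show 4*(m+3) = 4*m+12 by ring]
      push_cast; ring
    have v3 : fc (m+3) 3 = 3 * (Nat.choose (4*m+12) m : ℝ) / (m+3) := by
      simp only [fc, if_neg (by omega : ¬ m + 3 = 0), if_pos (by omega : 3 ≤ m + 3),
        show m + 3 - 3 = m by omega, show 4*(m+3) = 4*m+12 by ring]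
      push_cast; ring
    rw [v1, v2, v3, show 4*(m+3)+1 = 4*m+13 by ring, show m+3+1 = m+4 by ring,
      show 3*(m+3)+2 = 3*m+11 by ring]
    have := final_id m
    push_cast at this ⊢
    linarith [this]
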